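/- Let C be a monoidal category whose unit 𝟙_C is an initial object, and suppose the identity functor of C admits a unital magma structure (μ, η). Fix objects A, B, set ι₁ := (ρ_A).inv ≫ (A ◁ η_B) : A ⟶ A ⊗ B, ι₂ := (λ_B).inv ≫ (η_A ▷ B) : B ⟶ A ⊗ B, and let e_{A,B} := ((ρ_A).inv ⊗ (λ_B).inv) ≫ ((A ◁ η_B) ⊗ (η_A ▷ B)) ≫ μ_{A⊗B}. Then the idempotent e_{A,B} splits if and only if the binary coproduct of A and B exists in C; moreover, for any splitting p : A ⊗ B ⟶ S, i : S ⟶ A ⊗ B (with i ≫ p = 𝟙_S and p ≫ i = e_{A,B}), the cospan A —(ι₁ ≫ p)→ S ←(ι₂ ≫ p)— B is a binary coproduct of A and B. -/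

import Mathlib

open CategoryTheory CategoryTheory.Limits CategoryTheory.MonoidalCategory

/-- A unital magma structure on the identity functor of a monoidal category: natural
families `μ_A : A ⊗ A ⟶ A` and `η_A : 𝟙_C ⟶ A` satisfying the two unit laws. -/
structure IdMagma (C : Type*) [Category C] [MonoidalCategory C] where
  μ : ∀ A : C, A ⊗ A ⟶ A
  η : ∀ A : C, 𝟙_ C ⟶ A
  μ_natural : ∀ {A B : C} (f : A ⟶ B), (f ⊗ₘ f) ≫ μ B = μ A ≫ f
  η_natural : ∀ {A B : C} (f : A ⟶ B), η A ≫ f = η B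
  left_unit : ∀ A : C, (λ_ A).inv ≫ (η A ▷ A) ≫ μ A = 𝟙 A
  right_unit : ∀ A : C, (ρ_ A).inv ≫ (A ◁ η A) ≫ μ A = 𝟙 A

section Aux

variable {C : Type*} [Category C] [MonoidalCategory C] (m : IdMagma C)

lemma IdMagma.key1 {A B T : C} (f : A ⟶ T) (g : B ⟶ T) :
    ((ρ_ A).inv ≫ (A ◁ m.η B)) ≫ (f ⊗ₘ g) ≫ m.μ T = f := by
  have h1 : (A ◁ m.η B) ≫ (f ⊗ₘ g) = f ⊗ₘ m.η T := by
    rw [← MonoidalCategory.id_tensorHom, MonoidalCategory.tensorHom_comp_tensorHom, Category.id_comp,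
      m.η_natural]
  have h2 : f ⊗ₘ m.η T = (f ▷ 𝟙_ C) ≫ (T ◁ m.η T) := by
    rw [MonoidalCategory.tensorHom_def]
  rw [Category.assoc, ← Category.assoc (A ◁ m.η B), h1, h2, Category.assoc,
    ← Category.assoc (ρ_ A).inv, ← rightUnitor_inv_naturality, Category.assoc,
    m.right_unit, Category.comp_id]

lemma IdMagma.key2 {A B T : C} (f : A ⟶ T) (g : B ⟶ T) :
    ((λ_ B).inv ≫ (m.η A ▷ B)) ≫ (f ⊗ₘ g) ≫ m.μ T = g := by
  have h1 : (m.η A ▷ B) ≫ (f ⊗ₘ g) = m.η T ⊗ₘ g := by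
    rw [← MonoidalCategory.tensorHom_id, MonoidalCategory.tensorHom_comp_tensorHom, Category.id_comp,
      m.η_natural]
  have h2 : m.η T ⊗ₘ g = (𝟙_ C ◁ g) ≫ (m.η T ▷ T) := by
    rw [MonoidalCategory.tensorHom_def']
  rw [Category.assoc, ← Category.assoc (m.η A ▷ B), h1, h2, Category.assoc,
    ← Category.assoc (λ_ B).inv, ← leftUnitor_inv_naturality, Category.assoc,
    m.left_unit, Category.comp_id]

lemma IdMagma.e_eq (A B : C) :
    ((ρ_ A).inv ⊗ₘ (λ_ B).inv) ≫ ((A ◁ m.η B) ⊗ₘ (m.η A ▷ B)) ≫ m.μ (A ⊗ B) =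
      (((ρ_ A).inv ≫ (A ◁ m.η B)) ⊗ₘ ((λ_ B).inv ≫ (m.η A ▷ B))) ≫ m.μ (A ⊗ B) := by
  rw [← MonoidalCategory.tensorHom_comp_tensorHom, Category.assoc]

lemma IdMagma.e_comp (A B : C) {T : C} (k : A ⊗ B ⟶ T) :
    (((ρ_ A).inv ⊗ₘ (λ_ B).inv) ≫ ((A ◁ m.η B) ⊗ₘ (m.η A ▷ B)) ≫ m.μ (A ⊗ B)) ≫ k =
      ((((ρ_ A).inv ≫ (A ◁ m.η B)) ≫ k) ⊗ₘ (((λ_ B).inv ≫ (m.η A ▷ B)) ≫ k)) ≫ m.μ T := by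
  rw [m.e_eq, Category.assoc, ← m.μ_natural k, ← Category.assoc, MonoidalCategory.tensorHom_comp_tensorHom,
    Category.assoc]

/-- Any splitting of the canonical idempotent gives a binary coproduct. -/
noncomputable def IdMagma.isColimitOfSplitting (A B : C) (S : C) (p : A ⊗ B ⟶ S)
    (i : S ⟶ A ⊗ B) (hip : i ≫ p = 𝟙 S)
    (hpi : p ≫ i = ((ρ_ A).inv ⊗ₘ (λ_ B).inv) ≫ ((A ◁ m.η B) ⊗ₘ (m.η A ▷ B)) ≫ m.μ (A ⊗ B)) :
    IsColimit (BinaryCofan.mk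
      (((ρ_ A).inv ≫ (A ◁ m.η B)) ≫ p) (((λ_ B).inv ≫ (m.η A ▷ B)) ≫ p)) := by
  set ι₁ := (ρ_ A).inv ≫ (A ◁ m.η B) with hι₁
  set ι₂ := (λ_ B).inv ≫ (m.η A ▷ B) with hι₂
  have hi1 : ι₁ ≫ p ≫ i = ι₁ := by
    rw [hpi, m.e_eq]
    exact m.key1 ι₁ ι₂
  have hi2 : ι₂ ≫ p ≫ i = ι₂ := by
    rw [hpi, m.e_eq]
    exact m.key2 ι₁ ι₂
  refine BinaryCofan.isColimitMk (fun s => i ≫ (s.inl ⊗ₘ s.inr) ≫ m.μ s.pt) ?_ ?_ ?_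
  · intro s
    show (ι₁ ≫ p) ≫ i ≫ (s.inl ⊗ₘ s.inr) ≫ m.μ s.pt = s.inl
    rw [Category.assoc, ← Category.assoc p i, ← Category.assoc ι₁, hi1]
    exact m.key1 s.inl s.inr
  · intro s
    show (ι₂ ≫ p) ≫ i ≫ (s.inl ⊗ₘ s.inr) ≫ m.μ s.pt = s.inr
    rw [Category.assoc, ← Category.assoc p i, ← Category.assoc ι₂, hi2]
    exact m.key2 s.inl s.inr
  · intro s k hk1 hk2
    have hk1' : ι₁ ≫ p ≫ k = s.inl := by rw [← Category.assoc]; exact hk1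
    have hk2' : ι₂ ≫ p ≫ k = s.inr := by rw [← Category.assoc]; exact hk2
    have hpk : p ≫ k = (s.inl ⊗ₘ s.inr) ≫ m.μ s.pt := by
      have h1 : p ≫ i ≫ p ≫ k = p ≫ k := by
        rw [← Category.assoc i p, hip, Category.id_comp]
      have h2 : (p ≫ i) ≫ p ≫ k = ((ι₁ ≫ p ≫ k) ⊗ₘ (ι₂ ≫ p ≫ k)) ≫ m.μ s.pt := by
        rw [hpi]; exact m.e_comp A B (p ≫ k)
      rw [Category.assoc, h1, hk1', hk2'] at h2
      exact h2
    calc k = (i ≫ p) ≫ k := by rw [hip, Category.id_comp]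
    _ = i ≫ (s.inl ⊗ₘ s.inr) ≫ m.μ s.pt := by rw [Category.assoc, hpk]; rfl

end Aux

/-- In a monoidal category with initial unit and a unital magma structure on the identity
functor, the canonical idempotent on `A ⊗ B` splits iff the binary coproduct of `A` and
`B` exists, and any splitting exhibits the binary coproduct via the canonical
coprojections. -/
theorem coproducts_via_splitting {C : Type*} [Category C] [MonoidalCategory C]
    (hI : IsInitial (𝟙_ C)) (m : IdMagma C) (A B : C) :
    ((∃ (S : C) (p : A ⊗ B ⟶ S) (i : S ⟶ A ⊗ B),
        i ≫ p = 𝟙 S ∧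
        p ≫ i = ((ρ_ A).inv ⊗ₘ (λ_ B).inv) ≫ ((A ◁ m.η B) ⊗ₘ (m.η A ▷ B)) ≫ m.μ (A ⊗ B)) ↔
      HasBinaryCoproduct A B) ∧
    (∀ (S : C) (p : A ⊗ B ⟶ S) (i : S ⟶ A ⊗ B),
      i ≫ p = 𝟙 S →
      p ≫ i = ((ρ_ A).inv ⊗ₘ (λ_ B).inv) ≫ ((A ◁ m.η B) ⊗ₘ (m.η A ▷ B)) ≫ m.μ (A ⊗ B) →
      Nonempty (IsColimit (BinaryCofan.mk
        (((ρ_ A).inv ≫ (A ◁ m.η B)) ≫ p) (((λ_ B).inv ≫ (m.η A ▷ B)) ≫ p)))) := by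
  constructor
  · constructor
    · rintro ⟨S, p, i, hip, hpi⟩
      exact HasColimit.mk ⟨_, m.isColimitOfSplitting A B S p i hip hpi⟩
    · intro h
      refine ⟨A ⨿ B, (coprod.inl ⊗ₘ coprod.inr) ≫ m.μ (A ⨿ B),
        coprod.desc ((ρ_ A).inv ≫ (A ◁ m.η B)) ((λ_ B).inv ≫ (m.η A ▷ B)), ?_, ?_⟩
      · apply coprod.hom_ext
        · rw [← Category.assoc, coprod.inl_desc, Category.comp_id]
          exact m.key1 coprod.inl coprod.inr
        · rw [← Category.assoc, coprod.inr_desc, Category.comp_id]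
          exact m.key2 coprod.inl coprod.inr
      · rw [m.e_eq, Category.assoc, ← m.μ_natural (coprod.desc _ _), ← Category.assoc,
          MonoidalCategory.tensorHom_comp_tensorHom, coprod.inl_desc, coprod.inr_desc]
  · intro S p i hip hpi
    exact ⟨m.isColimitOfSplitting A B S p i hip hpi⟩
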